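/- Let P be a finite point set in a metric space, Q a Δ-translation of P, and k a fixed index. Then the k-th smallest pairwise distance of P and the k-th smallest pairwise distance of Q differ by at most 2Δ. -/

import Mathlib

/-- The `k`-th smallest value of a multiset of reals (1-indexed). -/
noncomputable def kthSmallest (S : Multiset ℝ) (k : ℕ) : ℝ :=
  (S.sort (· ≤ ·)).getD (k - 1) 0

/-- The multiset of all pairwise distances `dist x y` over ordered pairs `x ≠ y` of `P`. -/
def pairDists {X : Type*} [MetricSpace X] [DecidableEq X] (P : Finset X) : Multiset ℝ :=
  (((P ×ˢ P).filter fun q => q.1 ≠ q.2).val).map fun q => dist q.1 q.2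

lemma my_filter_eq_takeWhile (x : ℝ) : ∀ {l : List ℝ}, l.Pairwise (· ≤ ·) →
    l.filter (fun a => a ≤ x) = l.takeWhile (fun a => a ≤ x) := by
  intro l hl
  induction l with
  | nil => rfl
  | cons a l ih =>
    rcases List.pairwise_cons.mp hl with ⟨ha, hl'⟩
    by_cases h : a ≤ x
    · simp [List.filter_cons, List.takeWhile_cons, h, ih hl']
    · have hnil : l.filter (fun a => a ≤ x) = [] := by
        rw [List.filter_eq_nil_iff]
        intro b hb
        simp only [decide_eq_true_eq]
        exact fun hbx => h (le_trans (ha b hb) hbx)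
      simp [List.filter_cons, List.takeWhile_cons, h, hnil]

lemma my_kth_le_iff {l : List ℝ} (hl : l.Pairwise (· ≤ ·)) {k : ℕ} (hk1 : 1 ≤ k)
    (hk2 : k ≤ l.length) (x : ℝ) :
    l.getD (k-1) 0 ≤ x ↔ k ≤ (l.filter (fun a => a ≤ x)).length := by
  have hlt : k - 1 < l.length := by omega
  rw [List.getD_eq_getElem l 0 hlt]
  constructor
  · intro h
    have hsub : (l.take k).filter (fun a => a ≤ x) = l.take k := by
      rw [List.filter_eq_self]
      intro b hb
      rw [List.mem_iff_getElem] at hb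
      obtain ⟨i, hi, rfl⟩ := hb
      have hi' : i < k := lt_of_lt_of_le hi (by simp)
      have hile : i < l.length := by omega
      rw [List.getElem_take]
      simp only [decide_eq_true_eq]
      have hmono : l.get ⟨i, hile⟩ ≤ l.get ⟨k-1, hlt⟩ :=
        hl.rel_get_of_le (by simp [Fin.le_def]; omega)
      simp only [List.get_eq_getElem] at hmono
      exact le_trans hmono h
    have hsl : ((l.take k).filter (fun a => a ≤ x)).Sublist (l.filter (fun a => a ≤ x)) :=
      (List.take_sublist k l).filter _
    have := hsl.length_le
    rw [hsub, List.length_take] at this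
    omega
  · intro h
    rw [my_filter_eq_takeWhile x hl] at h
    have hk' : k - 1 < (l.takeWhile (fun a => a ≤ x)).length := by omega
    have hpre := List.takeWhile_prefix (l := l) (fun a => a ≤ x)
    have heq := hpre.getElem hk'
    have hmem : (l.takeWhile (fun a => a ≤ x))[k-1] ∈ l.takeWhile (fun a => a ≤ x) :=
      List.getElem_mem hk'
    have := List.mem_takeWhile_imp hmem
    rw [heq] at this
    simpa using this

lemma my_rel_card_filter_le {r : ℝ → ℝ → Prop} {p q : ℝ → Prop}
    [DecidablePred p] [DecidablePred q]
    (hpq : ∀ a b, r a b → p a → q b) :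
    ∀ {S T : Multiset ℝ}, Multiset.Rel r S T →
    Multiset.card (S.filter p) ≤ Multiset.card (T.filter q) := by
  intro S T h
  induction h with
  | zero => simp
  | @cons a b s t hab hst ih =>
    rw [Multiset.filter_cons, Multiset.filter_cons]
    by_cases hpa : p a
    · have hqb : q b := hpq a b hab hpa
      simp [hpa, hqb]
      omega
    · by_cases hqb : q b <;> simp [hpa, hqb] <;> omega

lemma my_rel_map_map {α : Type*} {r : ℝ → ℝ → Prop} (f : α → ℝ) (g : α → ℝ) :
    ∀ (s : Multiset α), (∀ a ∈ s, r (f a) (g a)) → Multiset.Rel r (s.map f) (s.map g) := by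
  intro s
  induction s using Multiset.induction with
  | empty => intro _; simp
  | cons a s ih =>
    intro h
    simp only [Multiset.map_cons]
    exact Multiset.Rel.cons (h a (Multiset.mem_cons_self a s))
      (ih fun b hb => h b (Multiset.mem_cons_of_mem hb))

lemma my_card_filter_sort (S : Multiset ℝ) (x : ℝ) :
    ((S.sort (· ≤ ·)).filter (fun a => a ≤ x)).length
      = Multiset.card (S.filter (fun a => a ≤ x)) := by
  conv_rhs => rw [← Multiset.sort_eq S (· ≤ ·)]
  rw [Multiset.filter_coe, Multiset.coe_card]

/-- If `Q` is a `Δ`-translation of a finite point set `P` (a bijection moving each point by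
at most `Δ`), then the `k`-th smallest pairwise distances of `P` and of `Q` differ by
at most `2Δ`. -/
theorem stmt4 {X : Type*} [MetricSpace X] [DecidableEq X] (P Q : Finset X) (Δ : ℝ)
    (f : X → X) (hbij : Set.BijOn f P Q) (hmove : ∀ p ∈ P, dist p (f p) ≤ Δ)
    (k : ℕ) (hk1 : 1 ≤ k) (hk2 : k ≤ Multiset.card (pairDists P)) :
    |kthSmallest (pairDists P) k - kthSmallest (pairDists Q) k| ≤ 2 * Δ := by
  classical
  set g : X × X → X × X := fun q => (f q.1, f q.2) with hg
  set PP := (P ×ˢ P).filter (fun q : X × X => q.1 ≠ q.2) with hPP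
  set QQ := (Q ×ˢ Q).filter (fun q : X × X => q.1 ≠ q.2) with hQQ
  have hinj : ∀ x ∈ PP, ∀ y ∈ PP, g x = g y → x = y := by
    intro x hx y hy hxy
    simp only [hPP, Finset.mem_filter, Finset.mem_product] at hx hy
    have h1 := hbij.injOn hx.1.1 hy.1.1 (congrArg Prod.fst hxy)
    have h2 := hbij.injOn hx.1.2 hy.1.2 (congrArg Prod.snd hxy)
    exact Prod.ext h1 h2
  have himg : PP.image g = QQ := by
    ext x
    simp only [Finset.mem_image, hPP, hQQ, Finset.mem_filter, Finset.mem_product]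
    constructor
    · rintro ⟨⟨p1, p2⟩, ⟨⟨hp1, hp2⟩, hne⟩, rfl⟩
      refine ⟨⟨hbij.mapsTo hp1, hbij.mapsTo hp2⟩, ?_⟩
      exact fun h => hne (hbij.injOn hp1 hp2 h)
    · rintro ⟨⟨hq1, hq2⟩, hne⟩
      obtain ⟨p1, hp1, hfp1⟩ := hbij.surjOn hq1
      obtain ⟨p2, hp2, hfp2⟩ := hbij.surjOn hq2
      refine ⟨(p1, p2), ⟨⟨hp1, hp2⟩, ?_⟩, ?_⟩
      · intro hps
        simp only at hps
        exact hne (by rw [← hfp1, ← hfp2, hps])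
      · simp [hg, hfp1, hfp2]
  have hval : QQ.val = PP.val.map g := by
    rw [← himg, Finset.image_val, Multiset.dedup_eq_self.mpr]
    exact Multiset.Nodup.map_on hinj PP.nodup
  have hQdists : pairDists Q = PP.val.map (fun q => dist (f q.1) (f q.2)) := by
    rw [pairDists, ← hQQ, hval, Multiset.map_map]
    rfl
  have hPdists : pairDists P = PP.val.map (fun q : X × X => dist q.1 q.2) := rfl
  -- the relation
  have hrel : Multiset.Rel (fun a b => |a - b| ≤ 2 * Δ) (pairDists P) (pairDists Q) := by
    rw [hPdists, hQdists]
    apply my_rel_map_map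
    intro q hq
    have hq' : q ∈ PP := hq
    simp only [hPP, Finset.mem_filter, Finset.mem_product] at hq'
    obtain ⟨⟨h1, h2⟩, _⟩ := hq'
    have hm1 := hmove q.1 h1
    have hm2 := hmove q.2 h2
    have t1 : dist q.1 q.2 ≤ dist q.1 (f q.1) + dist (f q.1) (f q.2) + dist (f q.2) q.2 :=
      dist_triangle4 _ _ _ _
    have t2 : dist (f q.1) (f q.2) ≤ dist (f q.1) q.1 + dist q.1 q.2 + dist q.2 (f q.2) :=
      dist_triangle4 _ _ _ _
    have c1 : dist (f q.1) q.1 = dist q.1 (f q.1) := dist_comm _ _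
    have c2 : dist (f q.2) q.2 = dist q.2 (f q.2) := dist_comm _ _
    rw [abs_sub_le_iff]
    exact ⟨by linarith, by linarith⟩
  have hcard : Multiset.card (pairDists P) = Multiset.card (pairDists Q) :=
    Multiset.card_eq_card_of_rel hrel
  have hsortedP : (Multiset.sort (pairDists P) (· ≤ ·)).Pairwise (· ≤ ·) :=
    Multiset.pairwise_sort _ _
  have hsortedQ : (Multiset.sort (pairDists Q) (· ≤ ·)).Pairwise (· ≤ ·) :=
    Multiset.pairwise_sort _ _
  have hlenP : k ≤ (Multiset.sort (pairDists P) (· ≤ ·)).length := by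
    rwa [Multiset.length_sort]
  have hlenQ : k ≤ (Multiset.sort (pairDists Q) (· ≤ ·)).length := by
    rw [Multiset.length_sort]; omega
  set s := kthSmallest (pairDists P) k with hs
  set t := kthSmallest (pairDists Q) k with ht
  have hΔ0 : 0 ≤ 2 * Δ := by
    by_contra hneg
    push_neg at hneg
    -- P is nonempty since pairDists P has card ≥ 1
    have : pairDists P ≠ 0 := by
      intro h0
      rw [h0] at hk2; simp at hk2; omega
    obtain ⟨a, ha⟩ := Multiset.exists_mem_of_ne_zero this
    rw [hPdists] at ha
    obtain ⟨q, hq, rfl⟩ := Multiset.mem_map.mp ha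
    have hq' : q ∈ PP := hq
    simp only [hPP, Finset.mem_filter, Finset.mem_product] at hq'
    have := hmove q.1 hq'.1.1
    have := dist_nonneg (x := q.1) (y := f q.1)
    linarith
  rw [abs_sub_le_iff]
  constructor
  · -- s - t ≤ 2Δ, i.e. s ≤ t + 2Δ
    have h1 : k ≤ ((Multiset.sort (pairDists Q) (· ≤ ·)).filter (fun a => a ≤ t)).length :=
      (my_kth_le_iff hsortedQ hk1 hlenQ t).mp le_rfl
    have h2 : Multiset.card ((pairDists Q).filter (fun a => a ≤ t))
        ≤ Multiset.card ((pairDists P).filter (fun a => a ≤ t + 2 * Δ)) := by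
      apply my_rel_card_filter_le (r := flip (fun a b => |a - b| ≤ 2 * Δ))
      · intro a b hab ha
        simp only [flip] at hab
        have := abs_sub_le_iff.mp hab
        linarith [this.1, this.2]
      · exact Multiset.rel_flip.mpr hrel
    have h3 : k ≤ ((Multiset.sort (pairDists P) (· ≤ ·)).filter (fun a => a ≤ t + 2 * Δ)).length := by
      rw [my_card_filter_sort]
      rw [my_card_filter_sort] at h1
      omega
    have hfin : s ≤ t + 2 * Δ := (my_kth_le_iff hsortedP hk1 hlenP (t + 2 * Δ)).mpr h3
    linarith
  · -- t - s ≤ 2Δ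
    have h1 : k ≤ ((Multiset.sort (pairDists P) (· ≤ ·)).filter (fun a => a ≤ s)).length :=
      (my_kth_le_iff hsortedP hk1 hlenP s).mp le_rfl
    have h2 : Multiset.card ((pairDists P).filter (fun a => a ≤ s))
        ≤ Multiset.card ((pairDists Q).filter (fun a => a ≤ s + 2 * Δ)) := by
      apply my_rel_card_filter_le (r := fun a b => |a - b| ≤ 2 * Δ)
      · intro a b hab ha
        have := abs_sub_le_iff.mp hab
        linarith [this.1, this.2]
      · exact hrel
    have h3 : k ≤ ((Multiset.sort (pairDists Q) (· ≤ ·)).filter (fun a => a ≤ s + 2 * Δ)).length := by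
      rw [my_card_filter_sort]
      rw [my_card_filter_sort] at h1
      omega
    have hfin : t ≤ s + 2 * Δ := (my_kth_le_iff hsortedQ hk1 hlenQ (s + 2 * Δ)).mpr h3
    linarith
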